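/- The number (21+√21)/10 is not an algebraic integer; consequently, the near-group fusion ring C_5 + 1, whose formal codegrees are (21+√21)/2, (21-√21)/2 and 5 (with multiplicity 4), fails the Drinfeld center criterion. -/

import Mathlib

open Polynomial Matrix

section CvLemmas
variable {α : Type*} (a b c d e f : α)
private lemma cv0 (h : 0 < 6) : ![a,b,c,d,e,f] ⟨0,h⟩ = a := rfl
private lemma cv1 (h : 1 < 6) : ![a,b,c,d,e,f] ⟨1,h⟩ = b := rfl
private lemma cv2 (h : 2 < 6) : ![a,b,c,d,e,f] ⟨2,h⟩ = c := rfl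
private lemma cv3 (h : 3 < 6) : ![a,b,c,d,e,f] ⟨3,h⟩ = d := rfl
private lemma cv4 (h : 4 < 6) : ![a,b,c,d,e,f] ⟨4,h⟩ = e := rfl
private lemma cv5 (h : 5 < 6) : ![a,b,c,d,e,f] ⟨5,h⟩ = f := rfl
private lemma cw0 : ![a,b,c,d,e,f] 0 = a := rfl
private lemma cw1 : ![a,b,c,d,e,f] 1 = b := rfl
private lemma cw2 : ![a,b,c,d,e,f] 2 = c := rfl
private lemma cw3 : ![a,b,c,d,e,f] 3 = d := rfl
private lemma cw4 : ![a,b,c,d,e,f] 4 = e := rfl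
private lemma cw5 : ![a,b,c,d,e,f] 5 = f := rfl
end CvLemmas

noncomputable section Aux

/-- Row-operations matrix (inverse of subtracting row 1 from rows 2–5). -/
private def Lm : Matrix (Fin 6) (Fin 6) ℝ[X] :=
  !![1,0,0,0,0,0; 1,1,0,0,0,0; 1,0,1,0,0,0; 1,0,0,1,0,0; 1,0,0,0,1,0;
     0,0,0,0,0,1]
/-- Column-operations matrix (inverse of adding cols 2–5 to col 1). -/
private def Um : Matrix (Fin 6) (Fin 6) ℝ[X] :=
  !![1,0,0,0,0,0; -1,1,0,0,0,0; -1,0,1,0,0,0; -1,0,0,1,0,0; -1,0,0,0,1,0;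
     0,0,0,0,0,1]
/-- The reduced (block-triangular up to permutation) matrix. -/
private def Em : Matrix (Fin 6) (Fin 6) ℝ[X] :=
  !![X-10,-1,-1,-1,-1,-1; 0,X-5,0,0,0,0; 0,0,X-5,0,0,0; 0,0,0,X-5,0,0;
     0,0,0,0,X-5,0; -5,-1,-1,-1,-1,X-11]
/-- Intermediate product `Em * Um`. -/
private def Gm : Matrix (Fin 6) (Fin 6) ℝ[X] :=
  !![X-6,-1,-1,-1,-1,-1; 5-X,X-5,0,0,0,0; 5-X,0,X-5,0,0,0; 5-X,0,0,X-5,0,0;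
     5-X,0,0,0,X-5,0; -1,-1,-1,-1,-1,X-11]
/-- The characteristic matrix of `B`. -/
private def CMm : Matrix (Fin 6) (Fin 6) ℝ[X] :=
  !![X-6,-1,-1,-1,-1,-1; -1,X-6,-1,-1,-1,-1; -1,-1,X-6,-1,-1,-1;
     -1,-1,-1,X-6,-1,-1; -1,-1,-1,-1,X-6,-1; -1,-1,-1,-1,-1,X-11]
/-- The condensed matrix `B = Σᵢ Xᵢ Xᵢᵀ`. -/
private def Bm : Matrix (Fin 6) (Fin 6) ℝ :=
  !![6,1,1,1,1,1; 1,6,1,1,1,1; 1,1,6,1,1,1; 1,1,1,6,1,1; 1,1,1,1,6,1;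
     1,1,1,1,1,11]

private lemma detLm : Lm.det = 1 := by
  rw [Matrix.det_of_lowerTriangular Lm]
  · rw [Fin.prod_univ_six]
    show (1:ℝ[X])*1*1*1*1*1 = 1
    norm_num
  · intro i j hij
    fin_cases i <;> fin_cases j <;> first | rfl | exact absurd hij (by decide)

private lemma detUm : Um.det = 1 := by
  rw [Matrix.det_of_lowerTriangular Um]
  · rw [Fin.prod_univ_six]
    show (1:ℝ[X])*1*1*1*1*1 = 1
    norm_num
  · intro i j hij
    fin_cases i <;> fin_cases j <;> first | rfl | exact absurd hij (by decide)

private def eqv : Fin 6 ≃ (Fin 2 ⊕ Fin 4) where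
  toFun := ![Sum.inl 0, Sum.inr 0, Sum.inr 1, Sum.inr 2, Sum.inr 3, Sum.inl 1]
  invFun := Sum.elim ![0, 5] ![1, 2, 3, 4]
  left_inv := by decide
  right_inv := by decide

private lemma detEm : Em.det = (X ^ 2 - 21 * X + 105) * (X - 5) ^ 4 := by
  have h : Em = (Matrix.fromBlocks (!![X-10, -1; -5, X-11])
      (Matrix.of fun _ _ => (-1 : ℝ[X])) 0
      (Matrix.diagonal fun _ : Fin 4 => (X - 5 : ℝ[X]))).submatrix eqv eqv := by
    refine Matrix.ext fun i j => ?_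
    fin_cases i <;> fin_cases j <;> rfl
  rw [h, Matrix.det_submatrix_equiv_self, Matrix.det_fromBlocks_zero₂₁,
    Matrix.det_fin_two_of, Matrix.det_diagonal, Finset.prod_const]
  simp only [Finset.card_univ, Fintype.card_fin]
  ring

private lemma EmUm : Em * Um = Gm := by
  refine Matrix.ext fun i j => ?_
  fin_cases i <;> fin_cases j <;>
    simp only [Em, Um, Gm, Matrix.mul_apply, Fin.sum_univ_six, Matrix.of_apply,
      cv0, cv1, cv2, cv3, cv4, cv5, cw0, cw1, cw2, cw3, cw4, cw5] <;> ring

private lemma LmGm : Lm * Gm = CMm := by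
  refine Matrix.ext fun i j => ?_
  fin_cases i <;> fin_cases j <;>
    simp only [Lm, Gm, CMm, Matrix.mul_apply, Fin.sum_univ_six, Matrix.of_apply,
      cv0, cv1, cv2, cv3, cv4, cv5, cw0, cw1, cw2, cw3, cw4, cw5] <;> ring

private lemma charmatrixB : charmatrix Bm = CMm := by
  refine Matrix.ext fun i j => ?_
  fin_cases i <;> fin_cases j <;>
    simp only [Bm, charmatrix_apply, Matrix.diagonal_apply, CMm, Matrix.of_apply,
      cv0, cv1, cv2, cv3, cv4, cv5, cw0, cw1, cw2, cw3, cw4, cw5, map_ofNat,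
      _root_.map_one] <;>
    norm_num [Fin.ext_iff]

private lemma charpolyB :
    Bm.charpoly = (X ^ 2 - 21 * X + 105) * (X - 5) ^ 4 := by
  have hfact : CMm = Lm * (Em * Um) := by rw [EmUm, LmGm]
  rw [Matrix.charpoly, charmatrixB, hfact, Matrix.det_mul, Matrix.det_mul,
    detLm, detUm, detEm]
  ring

private lemma not_integral : ¬ IsIntegral ℤ ((21 + Real.sqrt 21) / 10) := by
  intro h
  set α : ℝ := (21 + Real.sqrt 21) / 10 with hα
  have hs : Real.sqrt 21 ^ 2 = 21 := Real.sq_sqrt (by norm_num)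
  have hirr : Irrational α := by
    have h21 : Irrational (Real.sqrt 21) := by
      rw [show (21:ℝ) = ((21:ℕ):ℝ) by norm_num]
      refine irrational_sqrt_natCast_iff.mpr ?_
      rintro ⟨r, hr⟩
      have h5 : r ≤ 5 := by nlinarith
      interval_cases r <;> omega
    simpa using Irrational.div_ratCast (Irrational.ratCast_add (q := 21) h21) (by norm_num : (10:ℚ) ≠ 0)
  set q : ℚ[X] := X ^ 2 - C (21/5) * X + C (21/5) with hqdef
  have hq0 : aeval α q = 0 := by
    simp only [hqdef, map_add, map_sub, _root_.map_mul, map_pow, aeval_X, aeval_C]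
    push_cast
    rw [hα]
    norm_num
    nlinarith [hs]
  have hqmonic : q.Monic := by unfold q; monicity!
  have hQint : IsIntegral ℚ α := (IsIntegral.tower_top h : IsIntegral ℚ α)
  have hdvd : minpoly ℚ α ∣ q := minpoly.dvd ℚ α hq0
  have hqdeg : q.natDegree = 2 := by unfold q; compute_degree!
  have hple : (minpoly ℚ α).natDegree ≤ 2 :=
    hqdeg ▸ natDegree_le_of_dvd hdvd hqmonic.ne_zero
  have hppos : 0 < (minpoly ℚ α).natDegree := minpoly.natDegree_pos hQint
  have hpne1 : (minpoly ℚ α).natDegree ≠ 1 := by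
    intro h1
    have hd : (minpoly ℚ α).degree = 1 := by
      rw [degree_eq_natDegree (minpoly.ne_zero hQint), h1]; rfl
    obtain ⟨r, hr⟩ := minpoly.mem_range_of_degree_eq_one ℚ α hd
    exact hirr ⟨r, by rw [← hr]; exact (eq_ratCast (algebraMap ℚ ℝ) r).symm⟩
  obtain ⟨c, hc⟩ := hdvd
  have hpm : (minpoly ℚ α).Monic := minpoly.monic hQint
  have hcdeg : c.natDegree = 0 := by
    have h2 := hc ▸ hqdeg
    rw [natDegree_mul (minpoly.ne_zero hQint)
      (fun h0 => by simp [h0] at hc; exact hqmonic.ne_zero hc)] at h2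
    omega
  have hcm : c.Monic := by
    have h3 := congrArg leadingCoeff hc
    rw [leadingCoeff_mul, hpm.leadingCoeff, one_mul, hqmonic.leadingCoeff] at h3
    exact h3.symm
  have hpq : minpoly ℚ α = q := by
    rw [hc, Polynomial.Monic.natDegree_eq_zero hcm |>.mp hcdeg, mul_one]
  have hmap : minpoly ℚ α = (minpoly ℤ α).map (algebraMap ℤ ℚ) :=
    minpoly.isIntegrallyClosed_eq_field_fractions ℚ ℝ h
  have hcoeff : ((minpoly ℤ α).coeff 1 : ℚ) = -(21/5) := by
    have h4 := congrArg (fun p => Polynomial.coeff p 1) (hmap.symm.trans hpq)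
    simp only [coeff_map, hqdef, coeff_add, coeff_sub, coeff_X_pow, coeff_C_mul,
      coeff_X, coeff_C] at h4
    simpa [eq_intCast] using h4
  have h5q : (5:ℚ) * ((minpoly ℤ α).coeff 1 : ℚ) = -21 := by rw [hcoeff]; norm_num
  have h5 : (5:ℤ) * (minpoly ℤ α).coeff 1 = -21 := by exact_mod_cast h5q
  omega

end Aux

/-- (21+√21)/10 is not an algebraic integer; consequently the near-group fusion
ring C₅ + 1, whose formal codegrees are (21±√21)/2 and 5 (multiplicity 4) — i.e.
the characteristic polynomial of A = Σᵢ Xᵢ Xᵢᵀ is (x² - 21x + 105)(x - 5)⁴ —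
fails the Drinfeld center criterion, since ((21+√21)/2)/5 = (21+√21)/10. -/
theorem nearGroup_C5_plus_1_fails_drinfeld :
    let X₁ : Matrix (Fin 6) (Fin 6) ℝ := 1
    let Xg : Matrix (Fin 6) (Fin 6) ℝ :=
      !![0,0,0,0,1,0; 1,0,0,0,0,0; 0,1,0,0,0,0; 0,0,1,0,0,0; 0,0,0,1,0,0;
         0,0,0,0,0,1]
    let Xg2 : Matrix (Fin 6) (Fin 6) ℝ :=
      !![0,0,0,1,0,0; 0,0,0,0,1,0; 1,0,0,0,0,0; 0,1,0,0,0,0; 0,0,1,0,0,0;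
         0,0,0,0,0,1]
    let Xg3 : Matrix (Fin 6) (Fin 6) ℝ :=
      !![0,0,1,0,0,0; 0,0,0,1,0,0; 0,0,0,0,1,0; 1,0,0,0,0,0; 0,1,0,0,0,0;
         0,0,0,0,0,1]
    let Xg4 : Matrix (Fin 6) (Fin 6) ℝ :=
      !![0,1,0,0,0,0; 0,0,1,0,0,0; 0,0,0,1,0,0; 0,0,0,0,1,0; 1,0,0,0,0,0;
         0,0,0,0,0,1]
    let Xx : Matrix (Fin 6) (Fin 6) ℝ :=
      !![0,0,0,0,0,1; 0,0,0,0,0,1; 0,0,0,0,0,1; 0,0,0,0,0,1; 0,0,0,0,0,1;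
         1,1,1,1,1,1]
    let A := X₁ * X₁ᵀ + Xg * Xgᵀ + Xg2 * Xg2ᵀ + Xg3 * Xg3ᵀ + Xg4 * Xg4ᵀ
      + Xx * Xxᵀ
    ¬ IsIntegral ℤ ((21 + Real.sqrt 21) / 10) ∧
      ((21 + Real.sqrt 21) / 2) / 5 = (21 + Real.sqrt 21) / 10 ∧
      A.charpoly = (X ^ 2 - 21 * X + 105) * (X - 5) ^ 4 := by
  intro X₁ Xg Xg2 Xg3 Xg4 Xx A
  refine ⟨not_integral, by ring, ?_⟩
  have h1 : X₁ * X₁ᵀ = 1 := by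
    rw [show X₁ = (1 : Matrix (Fin 6) (Fin 6) ℝ) from rfl, Matrix.transpose_one,
      one_mul]
  have hg : Xg * Xgᵀ = 1 := by
    refine Matrix.ext fun i j => ?_
    fin_cases i <;> fin_cases j <;>
      simp only [Xg, Matrix.mul_apply, Fin.sum_univ_six, Matrix.transpose_apply,
        Matrix.of_apply, cv0, cv1, cv2, cv3, cv4, cv5, cw0, cw1, cw2, cw3, cw4,
        cw5, Matrix.one_apply] <;>
      norm_num [Fin.ext_iff]
  have hg2 : Xg2 * Xg2ᵀ = 1 := by
    refine Matrix.ext fun i j => ?_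
    fin_cases i <;> fin_cases j <;>
      simp only [Xg2, Matrix.mul_apply, Fin.sum_univ_six, Matrix.transpose_apply,
        Matrix.of_apply, cv0, cv1, cv2, cv3, cv4, cv5, cw0, cw1, cw2, cw3, cw4,
        cw5, Matrix.one_apply] <;>
      norm_num [Fin.ext_iff]
  have hg3 : Xg3 * Xg3ᵀ = 1 := by
    refine Matrix.ext fun i j => ?_
    fin_cases i <;> fin_cases j <;>
      simp only [Xg3, Matrix.mul_apply, Fin.sum_univ_six, Matrix.transpose_apply,
        Matrix.of_apply, cv0, cv1, cv2, cv3, cv4, cv5, cw0, cw1, cw2, cw3, cw4,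
        cw5, Matrix.one_apply] <;>
      norm_num [Fin.ext_iff]
  have hg4 : Xg4 * Xg4ᵀ = 1 := by
    refine Matrix.ext fun i j => ?_
    fin_cases i <;> fin_cases j <;>
      simp only [Xg4, Matrix.mul_apply, Fin.sum_univ_six, Matrix.transpose_apply,
        Matrix.of_apply, cv0, cv1, cv2, cv3, cv4, cv5, cw0, cw1, cw2, cw3, cw4,
        cw5, Matrix.one_apply] <;>
      norm_num [Fin.ext_iff]
  have hxx : Xx * Xxᵀ = !![1,1,1,1,1,1; 1,1,1,1,1,1; 1,1,1,1,1,1; 1,1,1,1,1,1;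
      1,1,1,1,1,1; 1,1,1,1,1,6] := by
    refine Matrix.ext fun i j => ?_
    fin_cases i <;> fin_cases j <;>
      simp only [Xx, Matrix.mul_apply, Fin.sum_univ_six, Matrix.transpose_apply,
        Matrix.of_apply, cv0, cv1, cv2, cv3, cv4, cv5, cw0, cw1, cw2, cw3, cw4,
        cw5] <;>
      norm_num
  have hA : A = Bm := by
    show X₁ * X₁ᵀ + Xg * Xgᵀ + Xg2 * Xg2ᵀ + Xg3 * Xg3ᵀ + Xg4 * Xg4ᵀ
      + Xx * Xxᵀ = Bm
    rw [h1, hg, hg2, hg3, hg4, hxx]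
    refine Matrix.ext fun i j => ?_
    fin_cases i <;> fin_cases j <;>
      simp only [Bm, Matrix.add_apply, Matrix.one_apply, Matrix.of_apply,
        cv0, cv1, cv2, cv3, cv4, cv5, cw0, cw1, cw2, cw3, cw4, cw5] <;>
      norm_num [Fin.ext_iff]
  rw [hA, charpolyB]
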